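/- Under the assumptions that ‖P_T − p⁻¹ P_T A P_T‖ ≤ 4ε with 0 < ε < 1/4, and that α is a real number satisfying 1/((1+4ε)p) ≤ α ≤ 1/((1−4ε)p), one has ‖P_T − α P_T A P_T‖ ≤ 8ε/(1 − 4ε). -/

import Mathlib

open Matrix

/-- The Frobenius norm of a real matrix. -/
noncomputable def frobNorm {m n : ℕ} (A : Matrix (Fin m) (Fin n) ℝ) : ℝ :=
  Real.sqrt (∑ i, ∑ j, (A i j) ^ 2)

/-- The Frobenius (trace) inner product of two real matrices. -/
def finner {n : ℕ} (A B : Matrix (Fin n) (Fin n) ℝ) : ℝ :=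
  Matrix.trace (Aᵀ * B)

noncomputable def toE {n : ℕ} (A : Matrix (Fin n) (Fin n) ℝ) :
    EuclideanSpace ℝ (Fin n × Fin n) := WithLp.toLp 2 (fun q : Fin n × Fin n => A q.1 q.2)

lemma frob_eq {n : ℕ} (A : Matrix (Fin n) (Fin n) ℝ) : frobNorm A = ‖toE A‖ := by
  rw [EuclideanSpace.norm_eq, frobNorm]
  congr 1
  rw [Fintype.sum_prod_type]
  simp [toE, sq_abs]

lemma finner_eq {n : ℕ} (A B : Matrix (Fin n) (Fin n) ℝ) :
    finner A B = inner ℝ (toE A) (toE B) := by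
  rw [finner, Matrix.trace, PiLp.inner_apply, Fintype.sum_prod_type]
  simp [Matrix.diag, Matrix.mul_apply, toE, mul_comm]
  rw [Finset.sum_comm]

lemma toE_add {n : ℕ} (A B : Matrix (Fin n) (Fin n) ℝ) : toE (A + B) = toE A + toE B := by
  unfold toE; exact WithLp.toLp_add 2 _ _
lemma toE_sub {n : ℕ} (A B : Matrix (Fin n) (Fin n) ℝ) : toE (A - B) = toE A - toE B := by
  unfold toE; exact WithLp.toLp_sub 2 _ _
lemma toE_smul {n : ℕ} (c : ℝ) (A : Matrix (Fin n) (Fin n) ℝ) : toE (c • A) = c • toE A := by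
  unfold toE; exact WithLp.toLp_smul 2 c (fun q : Fin n × Fin n => A q.1 q.2)

lemma frob_nonneg {n : ℕ} (A : Matrix (Fin n) (Fin n) ℝ) : 0 ≤ frobNorm A := by
  rw [frob_eq]; exact norm_nonneg _

lemma frob_triangle {n : ℕ} (A B : Matrix (Fin n) (Fin n) ℝ) :
    frobNorm (A + B) ≤ frobNorm A + frobNorm B := by
  rw [frob_eq, frob_eq, frob_eq, toE_add]; exact norm_add_le _ _

lemma frob_smul {n : ℕ} (c : ℝ) (A : Matrix (Fin n) (Fin n) ℝ) :
    frobNorm (c • A) = |c| * frobNorm A := by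
  rw [frob_eq, frob_eq, toE_smul, norm_smul, Real.norm_eq_abs]

theorem stmt7 {n : ℕ}
    (P A : Matrix (Fin n) (Fin n) ℝ →ₗ[ℝ] Matrix (Fin n) (Fin n) ℝ)
    (hPproj : ∀ Z, P (P Z) = P Z)
    (hPsa : ∀ Y Z, finner (P Y) Z = finner Y (P Z))
    (hAsa : ∀ Y Z, finner (A Y) Z = finner Y (A Z))
    (p ε α : ℝ) (hp : 0 < p) (hε : 0 < ε) (hε' : ε < 1 / 4)
    (hbound : ∀ Z, frobNorm (P Z - p⁻¹ • P (A (P Z))) ≤ 4 * ε * frobNorm Z)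
    (hα₁ : 1 / ((1 + 4 * ε) * p) ≤ α) (hα₂ : α ≤ 1 / ((1 - 4 * ε) * p)) :
    ∀ Z : Matrix (Fin n) (Fin n) ℝ,
      frobNorm (P Z - α • P (A (P Z))) ≤ 8 * ε / (1 - 4 * ε) * frobNorm Z := by
  have h1 : (0:ℝ) < 1 - 4 * ε := by linarith
  have h2 : (0:ℝ) < 1 + 4 * ε := by linarith
  -- contraction property of P
  have hPnorm : ∀ Z, frobNorm (P Z) ≤ frobNorm Z := by
    intro Z
    have hcs : finner Z (P Z) ≤ frobNorm Z * frobNorm (P Z) := by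
      rw [finner_eq, frob_eq, frob_eq]
      exact real_inner_le_norm _ _
    have hsq : frobNorm (P Z) ^ 2 = finner Z (P Z) := by
      have : finner (P Z) (P Z) = finner Z (P (P Z)) := hPsa Z (P Z)
      rw [hPproj] at this
      rw [← this, finner_eq, frob_eq, real_inner_self_eq_norm_sq]
    rcases le_or_gt (frobNorm (P Z)) 0 with h | h
    · exact le_trans h (frob_nonneg Z)
    · nlinarith [hsq, hcs]
  intro Z
  set B := P Z - p⁻¹ • P (A (P Z)) with hB
  have hBbound : frobNorm B ≤ 4 * ε * frobNorm Z := hbound Z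
  -- bound on P A P Z
  have hPAP : frobNorm (P (A (P Z))) ≤ (1 + 4 * ε) * p * frobNorm Z := by
    have : P (A (P Z)) = p • (P Z - B) := by
      rw [hB]; rw [smul_sub, smul_sub]
      rw [smul_smul, mul_inv_cancel₀ hp.ne', one_smul]
      abel
    rw [this, frob_smul, abs_of_pos hp]
    have h3 : frobNorm (P Z - B) ≤ frobNorm (P Z) + frobNorm B := by
      have h := frob_triangle (P Z) ((-1 : ℝ) • B)
      rw [frob_smul] at h
      simp only [abs_neg, abs_one, one_mul, neg_one_smul] at h
      rw [sub_eq_add_neg]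
      exact h
    nlinarith [hPnorm Z, frob_nonneg Z]
  -- decomposition
  have hdecomp : P Z - α • P (A (P Z)) = B + (p⁻¹ - α) • P (A (P Z)) := by
    rw [hB, sub_smul]; abel
  -- bound |p⁻¹ - α|
  have hα₁' : 1 ≤ α * ((1 + 4 * ε) * p) := by
    rw [div_le_iff₀ (by positivity : (0:ℝ) < (1 + 4 * ε) * p)] at hα₁
    linarith
  have hα₂' : α * ((1 - 4 * ε) * p) ≤ 1 := by
    rw [le_div_iff₀ (by positivity : (0:ℝ) < (1 - 4 * ε) * p)] at hα₂
    linarith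
  have hid : p⁻¹ * ((1 - 4 * ε) * p) = 1 - 4 * ε := by field_simp
  have hdp : (0:ℝ) < (1 - 4 * ε) * p := by positivity
  have key : |p⁻¹ - α| * ((1 - 4 * ε) * p) ≤ 4 * ε := by
    rcases abs_cases (p⁻¹ - α) with ⟨h, _⟩ | ⟨h, _⟩ <;> rw [h]
    · nlinarith [hid, mul_nonneg (sub_nonneg.2 hα₁') h1.le,
        mul_nonneg (sub_nonneg.2 hα₂') (by linarith : (0:ℝ) ≤ 4 * ε)]
    · nlinarith [hid, hα₂']
  have habs : |p⁻¹ - α| ≤ 4 * ε / ((1 - 4 * ε) * p) := (le_div_iff₀ hdp).2 key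
  -- combine
  have hmain : frobNorm (P Z - α • P (A (P Z))) ≤
      frobNorm B + |p⁻¹ - α| * frobNorm (P (A (P Z))) := by
    rw [hdecomp]
    calc frobNorm (B + (p⁻¹ - α) • P (A (P Z)))
        ≤ frobNorm B + frobNorm ((p⁻¹ - α) • P (A (P Z))) := frob_triangle _ _
      _ = frobNorm B + |p⁻¹ - α| * frobNorm (P (A (P Z))) := by rw [frob_smul]
  have hfr : 0 ≤ frobNorm Z := frob_nonneg Z
  have hfr2 : 0 ≤ frobNorm (P (A (P Z))) := frob_nonneg _
  have habs' : |p⁻¹ - α| * frobNorm (P (A (P Z))) ≤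
      (4 * ε / ((1 - 4 * ε) * p)) * ((1 + 4 * ε) * p * frobNorm Z) := by
    apply mul_le_mul habs hPAP hfr2 (by positivity)
  have heq : (4 * ε / ((1 - 4 * ε) * p)) * ((1 + 4 * ε) * p * frobNorm Z)
      = 4 * ε * (1 + 4 * ε) / (1 - 4 * ε) * frobNorm Z := by
    field_simp
  have : 4 * ε * frobNorm Z + 4 * ε * (1 + 4 * ε) / (1 - 4 * ε) * frobNorm Z
      = 8 * ε / (1 - 4 * ε) * frobNorm Z := by
    field_simp; ring
  linarith [hmain, hBbound, habs', heq.le, heq.ge]
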